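/- Let n ≥ 1 and let f: [s,1] → [0,1] be in W^{1,2} with f(s) = 1/2, f(r₀) = 1 for some r₀ ∈ (s,1), and f(1) = α ∈ (0,1). Then for the n-axially symmetric map u(r,θ) = Π⁻¹(f(r)(cos nθ, sin nθ)), the energy satisfies E(u, D₁ \ D_s) ≥ (2πn − 4πn·(1/4)/(1+1/4)) + (2πn − 4πn·α²/(1+α²)) = 4πn − (4πn/5) − 4πnα²/(1+α²). -/

import Mathlib

open MeasureTheory Real Set

noncomputable section

/-- if the profile `f : [s,1] → [0,1]` satisfies `f(s) = 1/2`,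
`f(r₀) = 1` for some `r₀ ∈ (s,1)` and `f(1) = α ∈ (0,1)`, then the energy
`E(u, D₁\D_s) = 4π ∫_s^1 (f′² + n²f²/r²)/(1+f²)² r dr` of the associated
`n`-axially symmetric map satisfies
`E ≥ 4πn − 4πn/5 − 4πn α²/(1+α²)`. -/
theorem stmt19 (n : ℕ) (hn : 1 ≤ n) (s r₀ α : ℝ)
    (hs : 0 < s) (hsr : s < r₀) (hr1 : r₀ < 1) (hα0 : 0 < α) (hα1 : α < 1)
    (f f' : ℝ → ℝ)
    (hder : ∀ r ∈ Icc s 1, HasDerivAt f (f' r) r)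
    (hbd : ∀ r ∈ Icc s 1, 0 ≤ f r ∧ f r ≤ 1)
    (hfs : f s = 1/2) (hfr₀ : f r₀ = 1) (hf1 : f 1 = α)
    (hint : IntervalIntegrable
      (fun r => ((f' r) ^ 2 + (n : ℝ) ^ 2 * (f r) ^ 2 / r ^ 2) / (1 + (f r) ^ 2) ^ 2 * r)
      volume s 1) :
    4 * π * (∫ r in s..1,
        ((f' r) ^ 2 + (n : ℝ) ^ 2 * (f r) ^ 2 / r ^ 2) / (1 + (f r) ^ 2) ^ 2 * r)
      ≥ 4 * π * (n : ℝ) - 4 * π * (n : ℝ) / 5 - 4 * π * (n : ℝ) * α ^ 2 / (1 + α ^ 2) := by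
  set φ : ℝ → ℝ := fun r =>
    ((f' r) ^ 2 + (n : ℝ) ^ 2 * (f r) ^ 2 / r ^ 2) / (1 + (f r) ^ 2) ^ 2 * r with hφ
  set g : ℝ → ℝ := fun r => (n : ℝ) * (f r) ^ 2 / (1 + (f r) ^ 2) with hg
  set g' : ℝ → ℝ := fun r => (n : ℝ) * (2 * f r * f' r) / (1 + (f r) ^ 2) ^ 2 with hg'
  have hr01 : r₀ ≤ 1 := hr1.le
  have hsub1 : Icc s r₀ ⊆ Icc s 1 := Icc_subset_Icc le_rfl hr01
  have hsub2 : Icc r₀ 1 ⊆ Icc s 1 := Icc_subset_Icc hsr.le le_rfl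
  -- derivative of g
  have hgder : ∀ r ∈ Icc s 1, HasDerivAt g (g' r) r := by
    intro r hr
    have hf := hder r hr
    have hden : (1 + (f r) ^ 2) ≠ 0 := by positivity
    have h1 : HasDerivAt (fun x => (f x) ^ 2) (2 * f r * f' r) r := by
      have := hf.pow 2
      exact this.congr_deriv (by norm_num [mul_comm, mul_assoc, mul_left_comm])
    have h2 : HasDerivAt (fun x => (1 : ℝ) + (f x) ^ 2) (2 * f r * f' r) r := by
      exact h1.const_add 1
    have h3 : HasDerivAt (fun x => (f x) ^ 2 / (1 + (f x) ^ 2))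
        ((2 * f r * f' r * (1 + (f r) ^ 2) - (f r) ^ 2 * (2 * f r * f' r)) /
          (1 + (f r) ^ 2) ^ 2) r := h1.div h2 hden
    have h4 : HasDerivAt (fun y => (n : ℝ) * (f y ^ 2 / (1 + f y ^ 2))) _ r := h3.const_mul (n : ℝ)
    convert h4 using 1
    · simp [hg, mul_div_assoc]
    · show (n : ℝ) * (2 * f r * f' r) / (1 + (f r) ^ 2) ^ 2 = _
      rw [mul_div_assoc]
      congr 1
      ring
  have hgcont : ContinuousOn g (Icc s 1) := fun r hr => ((hgder r hr).continuousAt).continuousWithinAt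
  -- integrability on subintervals
  have hint1 : IntervalIntegrable φ volume s r₀ :=
    hint.mono_set (by rw [uIcc_of_le hsr.le, uIcc_of_le (hsr.le.trans hr01)]; exact hsub1)
  have hint2 : IntervalIntegrable φ volume r₀ 1 :=
    hint.mono_set (by rw [uIcc_of_le hr01, uIcc_of_le (hsr.le.trans hr01)]; exact hsub2)
  have hIcc1 : IntegrableOn φ (Icc s r₀) volume := by
    rw [integrableOn_Icc_iff_integrableOn_Ioc]
    exact (intervalIntegrable_iff_integrableOn_Ioc_of_le hsr.le).1 hint1
  have hIcc2 : IntegrableOn φ (Icc r₀ 1) volume := by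
    rw [integrableOn_Icc_iff_integrableOn_Ioc]
    exact (intervalIntegrable_iff_integrableOn_Ioc_of_le hr01).1 hint2
  -- pointwise bounds
  have key : ∀ r ∈ Icc s 1, |g' r| ≤ φ r := by
    intro r hr
    have hr0 : 0 < r := lt_of_lt_of_le hs hr.1
    have hf0 := (hbd r hr).1
    have hden : (0 : ℝ) < (1 + (f r) ^ 2) ^ 2 := by positivity
    have hA : φ r = (r ^ 2 * (f' r) ^ 2 + (n : ℝ) ^ 2 * (f r) ^ 2) /
        (r * (1 + (f r) ^ 2) ^ 2) := by
      rw [hφ]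
      field_simp
    rw [abs_le]
    constructor
    · have hstep : -(r ^ 2 * (f' r) ^ 2 + (n : ℝ) ^ 2 * (f r) ^ 2)
          ≤ (n : ℝ) * (2 * f r * f' r) * r := by
        nlinarith [sq_nonneg (r * f' r + (n : ℝ) * f r)]
      show -(φ r) ≤ (n : ℝ) * (2 * f r * f' r) / (1 + (f r) ^ 2) ^ 2
      rw [hA, ← neg_div, div_le_div_iff₀ (by positivity) hden]
      nlinarith [mul_le_mul_of_nonneg_right hstep hden.le]
    · have hstep : (n : ℝ) * (2 * f r * f' r) * r
          ≤ r ^ 2 * (f' r) ^ 2 + (n : ℝ) ^ 2 * (f r) ^ 2 := by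
        nlinarith [sq_nonneg (r * f' r - (n : ℝ) * f r)]
      show (n : ℝ) * (2 * f r * f' r) / (1 + (f r) ^ 2) ^ 2 ≤ φ r
      rw [hA, div_le_div_iff₀ hden (by positivity)]
      nlinarith [mul_le_mul_of_nonneg_right hstep hden.le]
  -- first interval
  have est1 : g r₀ - g s ≤ ∫ r in s..r₀, φ r := by
    apply intervalIntegral.sub_le_integral_of_hasDeriv_right_of_le hsr.le
      (hgcont.mono hsub1)
      (fun x hx => ((hgder x (hsub1 (Ioo_subset_Icc_self hx))).hasDerivWithinAt))
      hIcc1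
    intro x hx
    exact le_trans (le_abs_self _) (key x (hsub1 (Ioo_subset_Icc_self hx)))
  -- second interval
  have est2 : (-g 1) - (-g r₀) ≤ ∫ r in r₀..1, φ r := by
    apply intervalIntegral.sub_le_integral_of_hasDeriv_right_of_le hr01
      ((hgcont.mono hsub2).neg)
      (fun x hx => ((hgder x (hsub2 (Ioo_subset_Icc_self hx))).neg.hasDerivWithinAt))
      hIcc2
    intro x hx
    exact le_trans (neg_le_abs _) (key x (hsub2 (Ioo_subset_Icc_self hx)))
  have hsplit : (∫ r in s..1, φ r) = (∫ r in s..r₀, φ r) + ∫ r in r₀..1, φ r :=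
    (intervalIntegral.integral_add_adjacent_intervals hint1 hint2).symm
  -- values of g
  have hgs : g s = (n : ℝ) / 5 := by
    simp only [hg, hfs]
    norm_num
    ring
  have hgr₀ : g r₀ = (n : ℝ) / 2 := by simp [hg, hfr₀]; norm_num
  have hg1 : g 1 = (n : ℝ) * α ^ 2 / (1 + α ^ 2) := by simp [hg, hf1]
  have htotal : (n : ℝ) - (n : ℝ) / 5 - (n : ℝ) * α ^ 2 / (1 + α ^ 2)
      ≤ ∫ r in s..1, φ r := by
    rw [hsplit]
    rw [hgs, hgr₀] at est1
    rw [hg1, hgr₀] at est2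
    linarith
  have h4π : (0:ℝ) ≤ 4 * π := by positivity
  have heq : 4 * π * (n : ℝ) - 4 * π * (n : ℝ) / 5 - 4 * π * (n : ℝ) * α ^ 2 / (1 + α ^ 2)
      = 4 * π * ((n : ℝ) - (n : ℝ) / 5 - (n : ℝ) * α ^ 2 / (1 + α ^ 2)) := by ring
  rw [ge_iff_le, heq]
  exact mul_le_mul_of_nonneg_left htotal h4π

end
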